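/- Fix κ > 0. The function φ(B) = B · e^{Bκ} · E1(Bκ) is concave on (0, ∞). -/

import Mathlib

open Real

/-- The exponential integral `E1 x = ∫_x^∞ e^{-u}/u du`. -/
noncomputable def expInt (x : ℝ) : ℝ := ∫ u in Set.Ioi x, Real.exp (-u) / u

open MeasureTheory in
lemma shift_Ioi (f : ℝ → ℝ) (x : ℝ) :
    (∫ u in Set.Ioi x, f u) = ∫ t in Set.Ioi (0:ℝ), f (t + x) := by
  rw [← integral_indicator measurableSet_Ioi, ← integral_indicator measurableSet_Ioi]
  rw [← MeasureTheory.integral_add_right_eq_self (fun u => (Set.Ioi x).indicator f u) x]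
  congr 1
  funext t
  simp only [Set.indicator_apply, Set.mem_Ioi, lt_add_iff_pos_left]

open MeasureTheory in
lemma capacity_repr (κ : ℝ) (hκ : 0 < κ) (B : ℝ) (hB : 0 < B) :
    B * Real.exp (B * κ) * expInt (B * κ)
      = ∫ t in Set.Ioi (0:ℝ), Real.exp (-t) * (B / (B * κ + t)) := by
  unfold expInt
  rw [shift_Ioi (fun u => Real.exp (-u) / u) (B * κ)]
  rw [← integral_const_mul]
  congr 1
  funext t
  by_cases h : t + B * κ = 0
  · rw [h, show B * κ + t = 0 by linarith]
    simp
  · calc B * Real.exp (B * κ) * (Real.exp (-(t + B * κ)) / (t + B * κ))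
        = (Real.exp (B * κ) * Real.exp (-(t + B * κ))) * (B / (t + B * κ)) := by ring
      _ = Real.exp (-t) * (B / (B * κ + t)) := by
          rw [← Real.exp_add, show B * κ + -(t + B * κ) = -t by ring,
            show t + B * κ = B * κ + t by ring]

open MeasureTheory in
lemma capacity_integrable (κ : ℝ) (hκ : 0 < κ) (B : ℝ) (hB : 0 < B) :
    IntegrableOn (fun t => Real.exp (-t) * (B / (B * κ + t))) (Set.Ioi (0:ℝ)) := by
  have hdom : IntegrableOn (fun t => (1/κ) * Real.exp (-t)) (Set.Ioi (0:ℝ)) := by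
    have := exp_neg_integrableOn_Ioi 0 (one_pos (α := ℝ))
    simpa [IntegrableOn] using this.const_mul (1/κ)
  apply MeasureTheory.Integrable.mono hdom
  · apply ContinuousOn.aestronglyMeasurable _ measurableSet_Ioi
    apply ContinuousOn.mul (Continuous.continuousOn (by continuity))
    apply ContinuousOn.div continuousOn_const
      (Continuous.continuousOn (by continuity))
    intro t ht
    have : 0 < B * κ + t := by
      have := mul_pos hB hκ
      simp only [Set.mem_Ioi] at ht; linarith
    linarith
  · filter_upwards [MeasureTheory.ae_restrict_mem measurableSet_Ioi] with t ht
    simp only [Set.mem_Ioi] at ht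
    have hBκ : 0 < B * κ := mul_pos hB hκ
    have h1 : 0 < B * κ + t := by linarith
    have h2 : B / (B * κ + t) ≤ 1 / κ := by
      rw [div_le_div_iff₀ h1 hκ]
      nlinarith
    have h3 : 0 ≤ B / (B * κ + t) := le_of_lt (div_pos hB h1)
    rw [norm_mul, norm_mul, Real.norm_eq_abs, Real.norm_eq_abs, Real.norm_eq_abs,
      abs_of_nonneg (Real.exp_pos _).le, abs_of_nonneg h3,
      abs_of_nonneg (by positivity : (0:ℝ) ≤ 1/κ)]
    calc Real.exp (-t) * (B / (B * κ + t)) ≤ Real.exp (-t) * (1/κ) :=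
          mul_le_mul_of_nonneg_left h2 (Real.exp_pos _).le
      _ = 1/κ * Real.exp (-t) := by ring

open MeasureTheory in
/-- For fixed `κ > 0`, the (scaled) ergodic capacity `φ(B) = B e^{Bκ} E1(Bκ)` is concave
on `(0, ∞)`. -/
theorem concaveOn_ergodic_capacity (κ : ℝ) (hκ : 0 < κ) :
    ConcaveOn ℝ (Set.Ioi 0) (fun B : ℝ => B * Real.exp (B * κ) * expInt (B * κ)) := by
  refine ⟨convex_Ioi 0, fun x hx y hy a b ha hb hab => ?_⟩
  simp only [Set.mem_Ioi] at hx hy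
  simp only [smul_eq_mul]
  have hxy : 0 < a * x + b * y := by
    rcases lt_or_eq_of_le ha with h | h
    · have : 0 ≤ b * y := mul_nonneg hb hy.le
      nlinarith
    · have hb1 : b = 1 := by linarith
      simp [← h, hb1, hy]
  rw [capacity_repr κ hκ x hx, capacity_repr κ hκ y hy, capacity_repr κ hκ _ hxy]
  rw [← integral_const_mul, ← integral_const_mul,
    ← integral_add ((capacity_integrable κ hκ x hx).const_mul a)
      ((capacity_integrable κ hκ y hy).const_mul b)]
  apply setIntegral_mono_on
  · exact ((capacity_integrable κ hκ x hx).const_mul a).add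
      ((capacity_integrable κ hκ y hy).const_mul b)
  · exact capacity_integrable κ hκ _ hxy
  · exact measurableSet_Ioi
  · intro t ht
    simp only [Set.mem_Ioi] at ht
    have hD1 : 0 < x * κ + t := by nlinarith
    have hD2 : 0 < y * κ + t := by nlinarith
    have hD : 0 < (a * x + b * y) * κ + t := by nlinarith
    have key : a * (x / (x * κ + t)) + b * (y / (y * κ + t))
        ≤ (a * x + b * y) / ((a * x + b * y) * κ + t) := by
      have e1 : a * (x / (x * κ + t)) = a * x / (x * κ + t) := by ring
      have e2 : b * (y / (y * κ + t)) = b * y / (y * κ + t) := by ring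
      rw [e1, e2, div_add_div _ _ (ne_of_gt hD1) (ne_of_gt hD2),
        div_le_div_iff₀ (mul_pos hD1 hD2) hD]
      have hb' : b = 1 - a := by linarith
      subst hb'
      nlinarith [mul_nonneg (mul_nonneg (mul_nonneg (mul_nonneg ha hb) hκ.le) ht.le)
        (sq_nonneg (x - y))]
    have he : 0 ≤ Real.exp (-t) := (Real.exp_pos _).le
    calc a * (Real.exp (-t) * (x / (x * κ + t))) + b * (Real.exp (-t) * (y / (y * κ + t)))
        = Real.exp (-t) * (a * (x / (x * κ + t)) + b * (y / (y * κ + t))) := by ring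
      _ ≤ Real.exp (-t) * ((a * x + b * y) / ((a * x + b * y) * κ + t)) :=
          mul_le_mul_of_nonneg_left key he
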